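/- arXiv:1410.7857 — 2 statements merged into one kernel-verified Lean document; each statement's English description precedes it below -/
import Mathlib

section
/- Let W be a real vector space. For σ ∈ ΛW and α ∈ W*, let Ψ(σ, α) : ΛW → ΛW be the ℝ-linear map x ↦ σ ∧ ι_α(x). Then for all homogeneous σ ∈ Λ^p W and σ̂ ∈ Λ^q W and all α, α̂ ∈ W*: Ψ(σ, α) ∘ Ψ(σ̂, α̂) − (−1)^{(p+1)(q+1)} Ψ(σ̂, α̂) ∘ Ψ(σ, α) = Ψ(σ ∧ ι_α(σ̂), α̂) − (−1)^{(p+1)(q+1)} Ψ(σ̂ ∧ ι_{α̂}(σ), α). -/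
/-- The degree-`k` homogeneous component `Λᵏ W` of the exterior algebra. -/
noncomputable def piece (W : Type*) [AddCommGroup W] [Module ℝ W] (k : ℕ) :
    Submodule ℝ (ExteriorAlgebra ℝ W) :=
  (LinearMap.range (ExteriorAlgebra.ι ℝ : W →ₗ[ℝ] ExteriorAlgebra ℝ W)) ^ k

section Aux

variable {W : Type*} [AddCommGroup W] [Module ℝ W]

lemma piece_succ (k : ℕ) :
    piece W (k + 1) =
      piece W k * LinearMap.range (ExteriorAlgebra.ι ℝ : W →ₗ[ℝ] ExteriorAlgebra ℝ W) :=
  pow_succ _ _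

lemma mul_ι_mem {k : ℕ} {y : ExteriorAlgebra ℝ W} (hy : y ∈ piece W k) (w : W) :
    y * ExteriorAlgebra.ι ℝ w ∈ piece W (k + 1) := by
  rw [piece_succ]
  exact Submodule.mul_mem_mul hy (LinearMap.mem_range_self _ _)

variable (c : Module.Dual ℝ W → ExteriorAlgebra ℝ W →ₗ[ℝ] ExteriorAlgebra ℝ W)

lemma aux_c0 (hc1 : ∀ α, c α 1 = 0) (α : Module.Dual ℝ W) {x : ExteriorAlgebra ℝ W}
    (hx : x ∈ piece W 0) : c α x = 0 := by
  rw [piece, pow_zero] at hx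
  obtain ⟨r, rfl⟩ := Submodule.mem_one.mp hx
  rw [Algebra.algebraMap_eq_smul_one, map_smul, hc1, smul_zero]

lemma aux_mul_alg (y : ExteriorAlgebra ℝ W) (r : ℝ) :
    y * algebraMap ℝ (ExteriorAlgebra ℝ W) r = r • y := by
  rw [Algebra.algebraMap_eq_smul_one, mul_smul_comm, mul_one]

lemma aux_expand (hc2 : ∀ α (w : W), c α (ExteriorAlgebra.ι ℝ w) = algebraMap ℝ _ (α w))
    (hc3 : ∀ α (k : ℕ) (x y : ExteriorAlgebra ℝ W), x ∈ piece W k →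
      c α (x * y) = c α x * y + ((-1 : ℝ) ^ k) • (x * c α y))
    (α : Module.Dual ℝ W) (k : ℕ) {y : ExteriorAlgebra ℝ W} (hy : y ∈ piece W k) (w : W) :
    c α (y * ExteriorAlgebra.ι ℝ w)
      = c α y * ExteriorAlgebra.ι ℝ w + ((-1 : ℝ) ^ k * α w) • y := by
  rw [hc3 α k _ _ hy, hc2, aux_mul_alg, smul_smul]

lemma aux_deg (hc1 : ∀ α, c α 1 = 0)
    (hc2 : ∀ α (w : W), c α (ExteriorAlgebra.ι ℝ w) = algebraMap ℝ _ (α w))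
    (hc3 : ∀ α (k : ℕ) (x y : ExteriorAlgebra ℝ W), x ∈ piece W k →
      c α (x * y) = c α x * y + ((-1 : ℝ) ^ k) • (x * c α y))
    (α : Module.Dual ℝ W) :
    ∀ (k : ℕ) {x : ExteriorAlgebra ℝ W}, x ∈ piece W (k + 1) → c α x ∈ piece W k := by
  intro k
  induction k with
  | zero =>
    intro x hx
    rw [piece_succ] at hx
    refine Submodule.mul_induction_on hx ?_ ?_
    · rintro y hy _ ⟨w, rfl⟩
      rw [aux_expand c hc2 hc3 α 0 hy w, aux_c0 c hc1 α hy, zero_mul, zero_add]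
      exact Submodule.smul_mem _ _ hy
    · intro a b ha hb
      rw [map_add]; exact Submodule.add_mem _ ha hb
  | succ k ih =>
    intro x hx
    rw [piece_succ] at hx
    refine Submodule.mul_induction_on hx ?_ ?_
    · rintro y hy _ ⟨w, rfl⟩
      rw [aux_expand c hc2 hc3 α (k + 1) hy w]
      exact Submodule.add_mem _ (mul_ι_mem (ih hy) w) (Submodule.smul_mem _ _ hy)
    · intro a b ha hb
      rw [map_add]; exact Submodule.add_mem _ ha hb

lemma aux_anti_hom (hc1 : ∀ α, c α 1 = 0)
    (hc2 : ∀ α (w : W), c α (ExteriorAlgebra.ι ℝ w) = algebraMap ℝ _ (α w))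
    (hc3 : ∀ α (k : ℕ) (x y : ExteriorAlgebra ℝ W), x ∈ piece W k →
      c α (x * y) = c α x * y + ((-1 : ℝ) ^ k) • (x * c α y))
    (α αh : Module.Dual ℝ W) :
    ∀ (k : ℕ) {x : ExteriorAlgebra ℝ W}, x ∈ piece W k →
      c α (c αh x) = - c αh (c α x) := by
  intro k
  induction k with
  | zero =>
    intro x hx
    rw [aux_c0 c hc1 α hx, aux_c0 c hc1 αh hx, map_zero, map_zero, neg_zero]
  | succ k ih =>
    intro x hx
    rw [piece_succ] at hx
    refine Submodule.mul_induction_on hx ?_ ?_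
    · rintro y hy _ ⟨w, rfl⟩
      have e1 := aux_expand c hc2 hc3 αh k hy w
      have e2 := aux_expand c hc2 hc3 α k hy w
      rw [e1, e2, map_add, map_add, map_smul, map_smul]
      cases k with
      | zero =>
        simp [aux_c0 c hc1 α hy, aux_c0 c hc1 αh hy]
      | succ j =>
        have hdα : c α y ∈ piece W j := aux_deg c hc1 hc2 hc3 α j hy
        have hdαh : c αh y ∈ piece W j := aux_deg c hc1 hc2 hc3 αh j hy
        rw [aux_expand c hc2 hc3 α j hdαh w, aux_expand c hc2 hc3 αh j hdα w,
          ih hy, neg_mul]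
        have hsign : ((-1 : ℝ) ^ (j + 1)) = -((-1 : ℝ) ^ j) := by
          rw [pow_succ, mul_neg_one]
        rw [hsign]
        module
    · intro a b ha hb
      rw [map_add, map_add, map_add, map_add, ha, hb, neg_add]

lemma aux_anti (hc1 : ∀ α, c α 1 = 0)
    (hc2 : ∀ α (w : W), c α (ExteriorAlgebra.ι ℝ w) = algebraMap ℝ _ (α w))
    (hc3 : ∀ α (k : ℕ) (x y : ExteriorAlgebra ℝ W), x ∈ piece W k →
      c α (x * y) = c α x * y + ((-1 : ℝ) ^ k) • (x * c α y))
    (α αh : Module.Dual ℝ W) (x : ExteriorAlgebra ℝ W) :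
    c α (c αh x) = - c αh (c α x) := by
  induction x using DirectSum.Decomposition.inductionOn (fun i : ℕ => ⋀[ℝ]^i W) with
  | zero => simp
  | homogeneous m =>
    exact aux_anti_hom c hc1 hc2 hc3 α αh _ m.2
  | add a b ha hb => rw [map_add, map_add, map_add, map_add, ha, hb, neg_add]

lemma aux_ι_comm : ∀ (k : ℕ) {y : ExteriorAlgebra ℝ W}, y ∈ piece W k → ∀ (w : W),
    ExteriorAlgebra.ι ℝ w * y = ((-1 : ℝ) ^ k) • (y * ExteriorAlgebra.ι ℝ w) := by
  intro k
  induction k with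
  | zero =>
    intro y hy w
    rw [piece, pow_zero] at hy
    obtain ⟨r, rfl⟩ := Submodule.mem_one.mp hy
    rw [pow_zero, one_smul, Algebra.commutes]
  | succ k ih =>
    intro y hy w
    rw [piece_succ] at hy
    refine Submodule.mul_induction_on hy ?_ ?_
    · rintro z hz _ ⟨v, rfl⟩
      have swap : ExteriorAlgebra.ι ℝ w * ExteriorAlgebra.ι ℝ v
          = -(ExteriorAlgebra.ι ℝ v * ExteriorAlgebra.ι ℝ w) :=
        eq_neg_of_add_eq_zero_left (ExteriorAlgebra.ι_add_mul_swap w v)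
      rw [← mul_assoc, ih hz w, smul_mul_assoc, mul_assoc, swap, mul_neg,
        ← mul_assoc, pow_succ, mul_neg_one, neg_smul, smul_neg]
    · intro a b ha hb
      rw [mul_add, ha, hb, add_mul, smul_add]

lemma aux_comm : ∀ (p : ℕ) {σ : ExteriorAlgebra ℝ W}, σ ∈ piece W p →
    ∀ (q : ℕ) {σh : ExteriorAlgebra ℝ W}, σh ∈ piece W q →
      σ * σh = ((-1 : ℝ) ^ (p * q)) • (σh * σ) := by
  intro p
  induction p with
  | zero =>
    intro σ hσ q σh hσh
    rw [piece, pow_zero] at hσ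
    obtain ⟨r, rfl⟩ := Submodule.mem_one.mp hσ
    rw [zero_mul, pow_zero, one_smul, Algebra.commutes]
  | succ p ih =>
    intro σ hσ q σh hσh
    rw [piece_succ] at hσ
    refine Submodule.mul_induction_on hσ ?_ ?_
    · rintro y hy _ ⟨w, rfl⟩
      rw [mul_assoc, aux_ι_comm q hσh w, mul_smul_comm, ← mul_assoc, ih hy q hσh,
        smul_mul_assoc, smul_smul, mul_assoc, ← pow_add]
      congr 2
      ring
    · intro a b ha hb
      rw [add_mul, ha, hb, mul_add, smul_add]

end Aux

/-- for `Ψ(σ, α) : x ↦ σ ∧ ι_α(x)` and homogeneous `σ ∈ Λᵖ W`, `σ̂ ∈ Λᑫ W`: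
`Ψ(σ,α)∘Ψ(σ̂,α̂) − (−1)^{(p+1)(q+1)} Ψ(σ̂,α̂)∘Ψ(σ,α)
  = Ψ(σ ∧ ι_α(σ̂), α̂) − (−1)^{(p+1)(q+1)} Ψ(σ̂ ∧ ι_{α̂}(σ), α)`.
Here `c α` is the contraction by `α`, characterized by the stated axioms. -/
theorem stmt13 (W : Type*) [AddCommGroup W] [Module ℝ W]
    (c : Module.Dual ℝ W → ExteriorAlgebra ℝ W →ₗ[ℝ] ExteriorAlgebra ℝ W)
    (hc1 : ∀ α, c α 1 = 0)
    (hc2 : ∀ α (w : W), c α (ExteriorAlgebra.ι ℝ w) = algebraMap ℝ _ (α w))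
    (hc3 : ∀ α (k : ℕ) (x y : ExteriorAlgebra ℝ W), x ∈ piece W k →
      c α (x * y) = c α x * y + ((-1 : ℝ) ^ k) • (x * c α y))
    (p q : ℕ) (σ σh : ExteriorAlgebra ℝ W) (hσ : σ ∈ piece W p) (hσh : σh ∈ piece W q)
    (α αh : Module.Dual ℝ W) :
    ∀ x : ExteriorAlgebra ℝ W,
      σ * c α (σh * c αh x) -
        ((-1 : ℝ) ^ ((p + 1) * (q + 1))) • (σh * c αh (σ * c α x)) =
      (σ * c α σh) * c αh x -
        ((-1 : ℝ) ^ ((p + 1) * (q + 1))) • ((σh * c αh σ) * c α x) := by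
  intro x
  rw [hc3 α q σh _ hσh, hc3 αh p σ _ hσ]
  rw [aux_anti c hc1 hc2 hc3 α αh x]
  have h2 : ((-1 : ℝ)) ^ (p * 2) = 1 := by
    rw [mul_comm, pow_mul, neg_one_sq, one_pow]
  simp only [mul_add, mul_smul_comm, smul_add, mul_neg, smul_neg, ← mul_assoc]
  rw [aux_comm p hσ q hσh, smul_mul_assoc]
  match_scalars
  · ring
  · linear_combination ((-1 : ℝ) ^ q * (-1) ^ (q * p)) * h2
  · ring
end

section
/- Let n be a natural number, let W be a finite-dimensional real vector space with basis (w₁, …, w_m) and dual basis (w₁*, …, w_m*), let P = MvPolynomial (Fin n) ℝ be the polynomial algebra in variables X₁, …, Xₙ, let F : (Fin n → ℝ) → W and G : W → (Fin n → ℝ) be linear maps, and write Fμ = F(e_μ) for the standard basis vectors e_μ. Define d_F = Σ_{μ=1}^{n} (∂/∂X_μ) ⊗ (x ↦ ι(Fμ) ∧ x) and d*_G = Σ_{ν=1}^{m} (multiplication by the linear polynomial Σ_{κ=1}^{n} (G(w_ν))_κ X_κ) ⊗ ι_{w_ν*} on P ⊗ ΛW. Then the anticommutator satisfies d_F ∘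 d*_G + d*_G ∘ d_F = E₁ ⊗ id + id ⊗ E₂, where E₁ : P → P is given by E₁(p) = Σ_{μ=1}^{n} (Σ_{κ=1}^{n} (G(Fμ))_κ X_κ) · (∂p/∂X_μ) and E₂ : ΛW → ΛW is given by E₂(x) = Σ_{ν=1}^{m} ι(F(G(w_ν))) ∧ ι_{w_ν*}(x). -/
open scoped TensorProduct

section aux

variable {M N P Q : Type*} [AddCommGroup M] [AddCommGroup N] [AddCommGroup P] [AddCommGroup Q]
  [Module ℝ M] [Module ℝ N] [Module ℝ P] [Module ℝ Q]

lemma aux_sumComp {ι : Type*} (s : Finset ι) (f : ι → (M →ₗ[ℝ] M)) (g : M →ₗ[ℝ] M) :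
    (∑ i ∈ s, f i) ∘ₗ g = ∑ i ∈ s, f i ∘ₗ g := by
  ext x; simp [LinearMap.sum_apply]

lemma aux_compSum {ι : Type*} (s : Finset ι) (f : ι → (M →ₗ[ℝ] M)) (g : M →ₗ[ℝ] M) :
    g ∘ₗ (∑ i ∈ s, f i) = ∑ i ∈ s, g ∘ₗ f i := by
  ext x; simp [LinearMap.sum_apply]

lemma aux_map_sum_left {ι : Type*} (s : Finset ι) (f : ι → (M →ₗ[ℝ] P)) (g : N →ₗ[ℝ] Q) :
    TensorProduct.map (∑ i ∈ s, f i) g = ∑ i ∈ s, TensorProduct.map (f i) g := by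
  rw [← TensorProduct.mapBilinear_apply, map_sum, LinearMap.sum_apply]
  simp [TensorProduct.mapBilinear_apply]

lemma aux_map_sum_right {ι : Type*} (s : Finset ι) (f : M →ₗ[ℝ] P) (g : ι → (N →ₗ[ℝ] Q)) :
    TensorProduct.map f (∑ i ∈ s, g i) = ∑ i ∈ s, TensorProduct.map f (g i) := by
  rw [← TensorProduct.mapBilinear_apply, map_sum]
  simp [TensorProduct.mapBilinear_apply]

end aux

section mulLeft

variable {A : Type*} [Ring A] [Algebra ℝ A]

lemma aux_mulLeft_sum {ι : Type*} (s : Finset ι) (a : ι → A) :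
    LinearMap.mulLeft ℝ (∑ i ∈ s, a i) = ∑ i ∈ s, LinearMap.mulLeft ℝ (a i) := by
  ext x; simp [LinearMap.sum_apply, Finset.sum_mul]

lemma aux_mulLeft_smul (r : ℝ) (a : A) :
    LinearMap.mulLeft ℝ (r • a) = r • LinearMap.mulLeft ℝ a := by
  ext x; simp [smul_mul_assoc]

end mulLeft

lemma aux_pderiv_mulLeft (n : ℕ) (μ : Fin n) (g : Fin n → ℝ) :
    (MvPolynomial.pderiv μ).toLinearMap ∘ₗ
        LinearMap.mulLeft ℝ (∑ κ : Fin n, g κ • (MvPolynomial.X κ : MvPolynomial (Fin n) ℝ)) =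
      LinearMap.mulLeft ℝ (∑ κ : Fin n, g κ • (MvPolynomial.X κ : MvPolynomial (Fin n) ℝ)) ∘ₗ
          (MvPolynomial.pderiv μ).toLinearMap +
        g μ • LinearMap.id := by
  refine LinearMap.ext fun p => ?_
  simp only [LinearMap.comp_apply, LinearMap.mulLeft_apply, LinearMap.add_apply,
    LinearMap.smul_apply, LinearMap.id_apply, Derivation.coeFn_coe]
  rw [MvPolynomial.pderiv_mul]
  have : (MvPolynomial.pderiv μ) (∑ κ : Fin n, g κ • (MvPolynomial.X κ : MvPolynomial (Fin n) ℝ))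
      = MvPolynomial.C (g μ) := by
    rw [map_sum]
    simp only [Derivation.map_smul, MvPolynomial.pderiv_X, Pi.single_apply]
    simp [Finset.sum_ite_eq', MvPolynomial.smul_eq_C_mul, apply_ite]
  rw [this, add_comm]
  congr 1
  rw [MvPolynomial.C_mul']

/-- expansion of a vector of `Fin n → ℝ` in the standard basis -/
lemma aux_pi_expand (n : ℕ) (x : Fin n → ℝ) :
    x = ∑ μ : Fin n, x μ • (Pi.single μ 1 : Fin n → ℝ) := by
  ext κ
  simp [Pi.single_apply, Finset.sum_ite_eq', mul_comm]

set_option maxHeartbeats 1000000 in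
/-- the anticommutator of the Cartan–Poincaré operators satisfies
`d_F ∘ d*_G + d*_G ∘ d_F = E₁ ⊗ id + id ⊗ E₂`, where
`E₁(p) = Σ_μ (Σ_κ (G(Fμ))_κ X_κ) · ∂p/∂X_μ` and
`E₂(x) = Σ_ν ι(F(G(w_ν))) ∧ ι_{w_ν*}(x)`.
Here `c α` is the contraction by the functional `α`, characterized by the stated axioms. -/
theorem stmt18 (n m : ℕ) (W : Type*) [AddCommGroup W] [Module ℝ W] [FiniteDimensional ℝ W]
    (w : Module.Basis (Fin m) ℝ W)
    (c : Module.Dual ℝ W → ExteriorAlgebra ℝ W →ₗ[ℝ] ExteriorAlgebra ℝ W)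
    (hc1 : ∀ α, c α 1 = 0)
    (hc2 : ∀ α (x : W), c α (ExteriorAlgebra.ι ℝ x) = algebraMap ℝ _ (α x))
    (hc3 : ∀ α (k : ℕ) (x y : ExteriorAlgebra ℝ W), x ∈ piece W k →
      c α (x * y) = c α x * y + ((-1 : ℝ) ^ k) • (x * c α y))
    (F : (Fin n → ℝ) →ₗ[ℝ] W) (G : W →ₗ[ℝ] (Fin n → ℝ))
    (dF dG : (MvPolynomial (Fin n) ℝ ⊗[ℝ] ExteriorAlgebra ℝ W) →ₗ[ℝ]
             (MvPolynomial (Fin n) ℝ ⊗[ℝ] ExteriorAlgebra ℝ W))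
    (hdF : dF = ∑ μ : Fin n,
      TensorProduct.map (MvPolynomial.pderiv μ).toLinearMap
        (LinearMap.mulLeft ℝ (ExteriorAlgebra.ι ℝ (F (Pi.single μ 1)))))
    (hdG : dG = ∑ ν : Fin m,
      TensorProduct.map
        (LinearMap.mulLeft ℝ (∑ κ : Fin n, (G (w ν) κ) • (MvPolynomial.X κ : MvPolynomial (Fin n) ℝ)))
        (c (w.coord ν)))
    (E₁ : MvPolynomial (Fin n) ℝ →ₗ[ℝ] MvPolynomial (Fin n) ℝ)
    (hE₁ : E₁ = ∑ μ : Fin n,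
      (LinearMap.mulLeft ℝ
          (∑ κ : Fin n, (G (F (Pi.single μ 1)) κ) • (MvPolynomial.X κ : MvPolynomial (Fin n) ℝ))) ∘ₗ
        (MvPolynomial.pderiv μ).toLinearMap)
    (E₂ : ExteriorAlgebra ℝ W →ₗ[ℝ] ExteriorAlgebra ℝ W)
    (hE₂ : E₂ = ∑ ν : Fin m,
      (LinearMap.mulLeft ℝ (ExteriorAlgebra.ι ℝ (F (G (w ν))))) ∘ₗ c (w.coord ν)) :
    dF ∘ₗ dG + dG ∘ₗ dF =
      TensorProduct.map E₁ LinearMap.id + TensorProduct.map LinearMap.id E₂ := by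
  classical
  set A : Fin n → MvPolynomial (Fin n) ℝ →ₗ[ℝ] MvPolynomial (Fin n) ℝ :=
    fun μ => (MvPolynomial.pderiv μ).toLinearMap with hA
  set B : Fin n → ExteriorAlgebra ℝ W →ₗ[ℝ] ExteriorAlgebra ℝ W :=
    fun μ => LinearMap.mulLeft ℝ (ExteriorAlgebra.ι ℝ (F (Pi.single μ 1))) with hB
  set Mo : Fin m → MvPolynomial (Fin n) ℝ →ₗ[ℝ] MvPolynomial (Fin n) ℝ :=
    fun ν => LinearMap.mulLeft ℝ
      (∑ κ : Fin n, (G (w ν) κ) • (MvPolynomial.X κ : MvPolynomial (Fin n) ℝ)) with hMo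
  set Co : Fin m → ExteriorAlgebra ℝ W →ₗ[ℝ] ExteriorAlgebra ℝ W :=
    fun ν => c (w.coord ν) with hCo
  -- commutation relation on the polynomial side
  have com1 : ∀ (μ : Fin n) (ν : Fin m),
      A μ ∘ₗ Mo ν = Mo ν ∘ₗ A μ + (G (w ν) μ) • LinearMap.id :=
    fun μ ν => aux_pderiv_mulLeft n μ (G (w ν))
  -- anticommutation relation on the exterior algebra side
  have hcmul : ∀ (α : Module.Dual ℝ W) (v : W) (x : ExteriorAlgebra ℝ W),
      c α (ExteriorAlgebra.ι ℝ v * x) = α v • x - ExteriorAlgebra.ι ℝ v * c α x := by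
    intro α v x
    have hmem : ExteriorAlgebra.ι ℝ v ∈ piece W 1 := by
      have h1 : piece W 1 =
          LinearMap.range (ExteriorAlgebra.ι ℝ : W →ₗ[ℝ] ExteriorAlgebra ℝ W) := pow_one _
      rw [h1]
      exact ⟨v, rfl⟩
    rw [hc3 α 1 _ x hmem, hc2, pow_one, neg_one_smul, Algebra.smul_def, sub_eq_add_neg]
  have com2 : ∀ (μ : Fin n) (ν : Fin m),
      Co ν ∘ₗ B μ = (w.coord ν (F (Pi.single μ 1))) • LinearMap.id - B μ ∘ₗ Co ν := by
    intro μ ν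
    refine LinearMap.ext fun x => ?_
    simp only [hCo, hB, LinearMap.comp_apply, LinearMap.mulLeft_apply, LinearMap.sub_apply,
      LinearMap.smul_apply, LinearMap.id_apply]
    exact hcmul _ _ x
  -- the per-(μ,ν) anticommutator
  have key : ∀ (μ : Fin n) (ν : Fin m),
      TensorProduct.map (A μ) (B μ) ∘ₗ TensorProduct.map (Mo ν) (Co ν) +
        TensorProduct.map (Mo ν) (Co ν) ∘ₗ TensorProduct.map (A μ) (B μ) =
      (G (w ν) μ) • TensorProduct.map LinearMap.id (B μ ∘ₗ Co ν) +
        (w.coord ν (F (Pi.single μ 1))) • TensorProduct.map (Mo ν ∘ₗ A μ) LinearMap.id := by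
    intro μ ν
    have h1 := LinearMap.congr_fun (com1 μ ν)
    have h2 := LinearMap.congr_fun (com2 μ ν)
    simp only [LinearMap.comp_apply, LinearMap.add_apply, LinearMap.sub_apply,
      LinearMap.smul_apply, LinearMap.id_apply] at h1 h2
    refine TensorProduct.ext' fun p x => ?_
    simp only [LinearMap.add_apply, LinearMap.comp_apply, TensorProduct.map_tmul,
      LinearMap.smul_apply, LinearMap.id_apply]
    rw [h1, h2, TensorProduct.add_tmul, TensorProduct.tmul_sub, TensorProduct.smul_tmul',
      TensorProduct.tmul_smul]
    abel
  -- expand the left-hand side as a double sum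
  rw [hdF, hdG, aux_sumComp, aux_sumComp]
  simp only [aux_compSum]
  rw [Finset.sum_comm (γ := Fin m)]
  rw [← Finset.sum_add_distrib]
  simp only [← Finset.sum_add_distrib]
  calc
    ∑ μ : Fin n, ∑ ν : Fin m,
        (TensorProduct.map (A μ) (B μ) ∘ₗ TensorProduct.map (Mo ν) (Co ν) +
          TensorProduct.map (Mo ν) (Co ν) ∘ₗ TensorProduct.map (A μ) (B μ))
      = ∑ μ : Fin n, ∑ ν : Fin m,
          ((G (w ν) μ) • TensorProduct.map LinearMap.id (B μ ∘ₗ Co ν) +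
            (w.coord ν (F (Pi.single μ 1))) • TensorProduct.map (Mo ν ∘ₗ A μ) LinearMap.id) :=
        Finset.sum_congr rfl fun μ _ => Finset.sum_congr rfl fun ν _ => key μ ν
    _ = (∑ μ : Fin n, ∑ ν : Fin m,
            (w.coord ν (F (Pi.single μ 1))) • TensorProduct.map (Mo ν ∘ₗ A μ) LinearMap.id) +
        (∑ ν : Fin m, ∑ μ : Fin n,
            (G (w ν) μ) • TensorProduct.map LinearMap.id (B μ ∘ₗ Co ν)) := by
        simp only [Finset.sum_add_distrib]
        rw [add_comm]
        congr 1
        exact Finset.sum_comm .. 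
    _ = TensorProduct.map E₁ LinearMap.id + TensorProduct.map LinearMap.id E₂ := by
        congr 1
        · -- E₁ part
          rw [hE₁, aux_map_sum_left]
          refine Finset.sum_congr rfl fun μ _ => ?_
          have hGF : (∑ κ : Fin n, (G (F (Pi.single μ 1)) κ) •
                (MvPolynomial.X κ : MvPolynomial (Fin n) ℝ)) =
              ∑ ν : Fin m, (w.coord ν (F (Pi.single μ 1))) •
                (∑ κ : Fin n, (G (w ν) κ) • (MvPolynomial.X κ : MvPolynomial (Fin n) ℝ)) := by
            have hF : G (F (Pi.single μ 1)) =
                ∑ ν : Fin m, (w.coord ν (F (Pi.single μ 1))) • G (w ν) := by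
              conv_lhs => rw [← Module.Basis.sum_repr w (F (Pi.single μ 1))]
              rw [map_sum]
              simp [Module.Basis.coord_apply]
            rw [hF]
            simp only [Finset.sum_apply, Pi.smul_apply, smul_eq_mul, Finset.sum_smul,
              Finset.smul_sum, smul_smul]
            exact Finset.sum_comm ..
          rw [hGF, aux_mulLeft_sum]
          simp only [aux_mulLeft_smul]
          rw [aux_sumComp, aux_map_sum_left]
          refine Finset.sum_congr rfl fun ν _ => ?_
          rw [LinearMap.smul_comp, TensorProduct.map_smul_left]
        · -- E₂ part
          rw [hE₂, aux_map_sum_right]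
          refine Finset.sum_congr rfl fun ν _ => ?_
          have hι : ExteriorAlgebra.ι ℝ (F (G (w ν))) =
              ∑ μ : Fin n, (G (w ν) μ) • ExteriorAlgebra.ι ℝ (F (Pi.single μ 1)) := by
            conv_lhs => rw [aux_pi_expand n (G (w ν))]
            rw [map_sum, map_sum]
            simp
          rw [hι, aux_mulLeft_sum]
          simp only [aux_mulLeft_smul]
          rw [aux_sumComp, aux_map_sum_right]
          refine Finset.sum_congr rfl fun μ _ => ?_
          rw [LinearMap.smul_comp, TensorProduct.map_smul_right]
end
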